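/- Let A = (A1 A2) ∈ ℝ^{m×n} with A1 ∈ ℝ^{m×k} of full rank k. For weight matrices W = (W1 W2), with W1 having positive entries and W2 staying bounded, let (X̃1(W) X̃2(W)) be a minimizer of ‖((A1 A2) − (X1 X2)) ⊙ (W1 W2)‖_F² over (X1 X2) with rank(X1 X2) ≤ r, and set λ = min_{i,j}(W1)_{ij}. Then ‖P⊥_{X̃1(W)}(A2) − P⊥_{A1}(A2)‖_F = O(1/λ) as λ → ∞. -/

import Mathlib

open Matrix Filter Topology

noncomputable def frob {α β : Type*} [Fintype α] [Fintype β] (M : Matrix α β ℝ) : ℝ :=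
  Real.sqrt (∑ i, ∑ j, (M i j) ^ 2)

noncomputable def projCol {m k : ℕ} (B : Matrix (Fin m) (Fin k) ℝ) :
    Matrix (Fin m) (Fin m) ℝ :=
  B * (Bᵀ * B)⁻¹ * Bᵀ

section Aux

attribute [local instance] Matrix.normedAddCommGroup Matrix.normedSpace

lemma cdEntry {a b : ℕ} (i : Fin a) (j : Fin b) :
    ContDiff ℝ 1 (fun B : Matrix (Fin a) (Fin b) ℝ => B i j) :=
  contDiff_apply_apply (𝕜 := ℝ) (E := ℝ) i j

lemma cdDetComp {E : Type*} [NormedAddCommGroup E] [NormedSpace ℝ E] {p : ℕ}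
    {f : E → Matrix (Fin p) (Fin p) ℝ} (h : ∀ i j, ContDiff ℝ 1 fun x => f x i j) :
    ContDiff ℝ 1 (fun x => (f x).det) := by
  simp_rw [Matrix.det_apply']
  exact ContDiff.sum fun σ _ => contDiff_const.mul (contDiff_prod fun i _ => h (σ i) i)

lemma cdAdjEntry {E : Type*} [NormedAddCommGroup E] [NormedSpace ℝ E] {p : ℕ}
    {f : E → Matrix (Fin p) (Fin p) ℝ} (h : ∀ i j, ContDiff ℝ 1 fun x => f x i j)
    (i j : Fin p) : ContDiff ℝ 1 (fun x => (f x).adjugate i j) := by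
  simp_rw [Matrix.adjugate_apply]
  apply cdDetComp
  intro s t
  simp_rw [Matrix.updateRow_apply]
  by_cases hs : s = j
  · simp only [hs, if_pos rfl]; exact contDiff_const
  · simp only [if_neg hs]; exact h s t

lemma cdBtB {a b : ℕ} (s t : Fin b) :
    ContDiff ℝ 1 (fun B : Matrix (Fin a) (Fin b) ℝ => (Bᵀ * B) s t) := by
  simp_rw [Matrix.mul_apply, Matrix.transpose_apply]
  exact ContDiff.sum fun i _ => (cdEntry i s).mul (cdEntry i t)

noncomputable def Gfun {a b : ℕ} (B : Matrix (Fin a) (Fin b) ℝ) : Matrix (Fin a) (Fin a) ℝ :=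
  (Bᵀ * B).det⁻¹ • (B * (Bᵀ * B).adjugate * Bᵀ)

lemma projCol_eq_G {a b : ℕ} (B : Matrix (Fin a) (Fin b) ℝ) : projCol B = Gfun B := by
  rw [projCol, Gfun, Matrix.inv_def, Ring.inverse_eq_inv', Matrix.mul_smul, Matrix.smul_mul]

lemma cdProdEntry {a b : ℕ} (i j : Fin a) :
    ContDiff ℝ 1 (fun B : Matrix (Fin a) (Fin b) ℝ => (B * (Bᵀ * B).adjugate * Bᵀ) i j) := by
  simp_rw [Matrix.mul_apply, Matrix.transpose_apply, Finset.sum_mul]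
  refine ContDiff.sum fun t _ => ContDiff.sum fun s _ => ((cdEntry i s).mul ?_).mul (cdEntry j t)
  exact cdAdjEntry (fun u v => cdBtB u v) s t

lemma cdG {a b : ℕ} (A : Matrix (Fin a) (Fin b) ℝ) (hd : (Aᵀ * A).det ≠ 0) :
    ContDiffAt ℝ 1 (Gfun (a := a) (b := b)) A := by
  apply contDiffAt_pi.2
  intro i
  apply contDiffAt_pi.2
  intro j
  have h1 : ContDiffAt ℝ 1 (fun B : Matrix (Fin a) (Fin b) ℝ => (Bᵀ * B).det⁻¹) A :=
    ContDiffAt.inv (cdDetComp (fun u v => cdBtB u v)).contDiffAt hd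
  have := h1.mul (cdProdEntry (b := b) i j).contDiffAt
  exact this.congr_of_eventuallyEq (by filter_upwards with B; simp [Gfun])

lemma isUnitTT {a b : ℕ} (A : Matrix (Fin a) (Fin b) ℝ) (h : A.rank = b) :
    IsUnit (Aᵀ * A) := by
  have hr : (Aᵀ * A).rank = b := by rw [Matrix.rank_transpose_mul_self, h]
  rw [← Matrix.mulVec_surjective_iff_isUnit]
  have htop : LinearMap.range (Aᵀ * A).mulVecLin = ⊤ := by
    apply Submodule.eq_top_of_finrank_eq
    rw [Module.finrank_fin_fun]
    exact hr
  intro v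
  obtain ⟨w, hw⟩ := LinearMap.range_eq_top.1 htop v
  exact ⟨w, by rw [← Matrix.mulVecLin_apply, hw]⟩

lemma frob_nonneg {α β : Type*} [Fintype α] [Fintype β] (M : Matrix α β ℝ) : 0 ≤ frob M :=
  Real.sqrt_nonneg _

lemma frob_sq {α β : Type*} [Fintype α] [Fintype β] (M : Matrix α β ℝ) :
    frob M ^ 2 = ∑ i, ∑ j, (M i j) ^ 2 := Real.sq_sqrt (by positivity)

lemma abs_entry_le_frob {α β : Type*} [Fintype α] [Fintype β] (M : Matrix α β ℝ) (i : α) (j : β) :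
    |M i j| ≤ frob M := by
  rw [frob, ← Real.sqrt_sq_eq_abs]
  apply Real.sqrt_le_sqrt
  calc (M i j) ^ 2 ≤ ∑ j', (M i j') ^ 2 :=
        Finset.single_le_sum (f := fun j' => (M i j') ^ 2) (fun _ _ => sq_nonneg _)
          (Finset.mem_univ j)
    _ ≤ ∑ i', ∑ j', (M i' j') ^ 2 :=
        Finset.single_le_sum (f := fun i' => ∑ j', (M i' j') ^ 2)
          (fun _ _ => Finset.sum_nonneg fun _ _ => sq_nonneg _) (Finset.mem_univ i)

lemma frob_le {a b : ℕ} (M : Matrix (Fin a) (Fin b) ℝ) (c : ℝ) (hc : 0 ≤ c)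
    (h : ∀ i j, |M i j| ≤ c) : frob M ≤ Real.sqrt (a * b) * c := by
  rw [frob]
  have h1 : ∑ i, ∑ j, (M i j) ^ 2 ≤ (a * b : ℝ) * c ^ 2 := by
    calc ∑ i, ∑ j, (M i j) ^ 2 ≤ ∑ _i : Fin a, ∑ _j : Fin b, c ^ 2 := by
          apply Finset.sum_le_sum; intro i _; apply Finset.sum_le_sum; intro j _
          calc (M i j) ^ 2 = |M i j| ^ 2 := (sq_abs _).symm
            _ ≤ c ^ 2 := pow_le_pow_left₀ (abs_nonneg _) (h i j) 2
      _ = (a * b : ℝ) * c ^ 2 := by simp [Finset.sum_const]; ring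
  calc Real.sqrt (∑ i, ∑ j, (M i j) ^ 2) ≤ Real.sqrt ((a * b : ℝ) * c ^ 2) :=
        Real.sqrt_le_sqrt h1
    _ = Real.sqrt (a * b) * c := by
        rw [Real.sqrt_mul (by positivity), Real.sqrt_sq hc]

set_option maxHeartbeats 2000000 in
/-- **Lemma 3.6 (iii).** For minimizers of the weighted low rank problem with `W1` positive
and `W2` bounded (by `ρ`), `‖P⊥_{X̃1(W)}(A2) − P⊥_{A1}(A2)‖_F = O(1/λ)` as
`λ = min_{i,j}(W1)_{ij} → ∞`: there are `C > 0` and `λ0 > 0` such that `λ ≥ λ0` implies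
`‖P⊥_{X̃1(W)}(A2) − P⊥_{A1}(A2)‖_F ≤ C/λ`. -/
theorem stmt_7 {m k l : ℕ}
    (A1 : Matrix (Fin m) (Fin k) ℝ) (A2 : Matrix (Fin m) (Fin l) ℝ)
    (r : ℕ) (hrank : A1.rank = k) (hkr : k ≤ r) (hrmn : r ≤ min m (k + l))
    (ρ : ℝ) (hρ : 0 < ρ) :
    ∃ C > (0 : ℝ), ∃ lam0 > (0 : ℝ),
      ∀ (W1 : Matrix (Fin m) (Fin k) ℝ) (W2 : Matrix (Fin m) (Fin l) ℝ) (lam : ℝ)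
        (X1 : Matrix (Fin m) (Fin k) ℝ) (X2 : Matrix (Fin m) (Fin l) ℝ),
        (∀ i j, 0 < W1 i j) → (∀ i j, |W2 i j| ≤ ρ) →
        (∀ i j, lam ≤ W1 i j) → (∃ i j, W1 i j = lam) → lam0 ≤ lam →
        ((Matrix.fromCols X1 X2).rank ≤ r ∧
          ∀ (Y1 : Matrix (Fin m) (Fin k) ℝ) (Y2 : Matrix (Fin m) (Fin l) ℝ),
            (Matrix.fromCols Y1 Y2).rank ≤ r →
            frob (Matrix.hadamard (A1 - X1) W1) ^ 2 +
                frob (Matrix.hadamard (A2 - X2) W2) ^ 2 ≤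
              frob (Matrix.hadamard (A1 - Y1) W1) ^ 2 +
                frob (Matrix.hadamard (A2 - Y2) W2) ^ 2) →
        frob ((1 - projCol X1) * A2 - (1 - projCol A1) * A2) ≤ C / lam := by
  have hd0 : (A1ᵀ * A1).det ≠ 0 := by
    have hu := isUnitTT A1 hrank
    exact isUnit_iff_ne_zero.1 ((Matrix.isUnit_iff_isUnit_det _).1 hu)
  obtain ⟨K, t, ht, hlip⟩ := (cdG A1 hd0).exists_lipschitzOnWith
  obtain ⟨ε, hε, hball⟩ := Metric.nhds_basis_closedBall.mem_iff.1 ht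
  set N : Matrix (Fin k) (Fin l) ℝ := (A1ᵀ * A1)⁻¹ * (A1ᵀ * A2) with hN
  set R : Matrix (Fin m) (Fin l) ℝ := A2 - A1 * N with hR
  set D : ℝ := ρ * frob R with hD
  have hD0 : 0 ≤ D := mul_nonneg hρ.le (frob_nonneg _)
  set c1 : ℝ := Real.sqrt (m * l) * m * frob A2 with hc1
  have hc10 : 0 ≤ c1 := mul_nonneg (mul_nonneg (Real.sqrt_nonneg _) (Nat.cast_nonneg m)) (frob_nonneg _)
  have hK0 : (0:ℝ) ≤ K := K.coe_nonneg
  have hCKD : (0:ℝ) ≤ c1 * K * D := mul_nonneg (mul_nonneg hc10 hK0) hD0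
  refine ⟨c1 * K * D + 1, by linarith, max 1 ((D + 1) / ε),
    lt_of_lt_of_le one_pos (le_max_left _ _), ?_⟩
  intro W1 W2 lam X1 X2 hW1 hW2 hlamle _hex hlam0 hXmin
  obtain ⟨hrX, hopt⟩ := hXmin
  have hlam1 : (1:ℝ) ≤ lam := le_trans (le_max_left _ _) hlam0
  have hlampos : 0 < lam := lt_of_lt_of_le one_pos hlam1
  -- feasibility of (A1, A1 * N)
  have hfeas : (Matrix.fromCols A1 (A1 * N)).rank ≤ r := by
    have heq : Matrix.fromCols A1 (A1 * N) = A1 * Matrix.fromCols 1 N := by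
      rw [Matrix.mul_fromCols, Matrix.mul_one]
    rw [heq]
    exact le_trans (Matrix.rank_mul_le_left _ _) (le_trans (le_of_eq hrank) hkr)
  have hmin := hopt A1 (A1 * N) hfeas
  have ht1 : frob (Matrix.hadamard (A1 - A1) W1) = 0 := by
    simp [frob, Matrix.hadamard_apply]
  have ht2 : frob (Matrix.hadamard (A2 - A1 * N) W2) ^ 2 ≤ D ^ 2 := by
    rw [hD, mul_pow, frob_sq, frob_sq, Finset.mul_sum]
    apply Finset.sum_le_sum
    intro i _
    rw [Finset.mul_sum]
    apply Finset.sum_le_sum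
    intro j _
    have h1 : (W2 i j) ^ 2 ≤ ρ ^ 2 := by
      rw [← sq_abs]
      exact pow_le_pow_left₀ (abs_nonneg _) (hW2 i j) 2
    have h2 : (0:ℝ) ≤ (R i j) ^ 2 := sq_nonneg _
    calc (Matrix.hadamard (A2 - A1 * N) W2 i j) ^ 2
        = (R i j) ^ 2 * (W2 i j) ^ 2 := by
          rw [Matrix.hadamard_apply, mul_pow, hR]
      _ ≤ (R i j) ^ 2 * ρ ^ 2 := mul_le_mul_of_nonneg_left h1 h2
      _ = ρ ^ 2 * (R i j) ^ 2 := by ring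
  have hs1 : frob (Matrix.hadamard (A1 - X1) W1) ^ 2 ≤ D ^ 2 := by
    have h2 : (0:ℝ) ≤ frob (Matrix.hadamard (A2 - X2) W2) ^ 2 := sq_nonneg _
    rw [ht1] at hmin
    nlinarith [hmin, ht2]
  -- entrywise bound on X1 - A1
  have hent : ∀ i j, |(X1 - A1) i j| ≤ D / lam := by
    intro i j
    have hterm : ((A1 - X1) i j * W1 i j) ^ 2 ≤ D ^ 2 := by
      refine le_trans ?_ hs1
      rw [frob_sq]
      calc ((A1 - X1) i j * W1 i j) ^ 2
          = (Matrix.hadamard (A1 - X1) W1 i j) ^ 2 := by rw [Matrix.hadamard_apply]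
        _ ≤ ∑ j', (Matrix.hadamard (A1 - X1) W1 i j') ^ 2 :=
            Finset.single_le_sum (f := fun j' => (Matrix.hadamard (A1 - X1) W1 i j') ^ 2)
              (fun _ _ => sq_nonneg _) (Finset.mem_univ j)
        _ ≤ ∑ i', ∑ j', (Matrix.hadamard (A1 - X1) W1 i' j') ^ 2 :=
            Finset.single_le_sum (f := fun i' => ∑ j', (Matrix.hadamard (A1 - X1) W1 i' j') ^ 2)
              (fun _ _ => Finset.sum_nonneg fun _ _ => sq_nonneg _) (Finset.mem_univ i)
    have hWlam : lam ^ 2 ≤ (W1 i j) ^ 2 := by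
      have := hlamle i j
      nlinarith [hlampos]
    have hsq : (lam * |(A1 - X1) i j|) ^ 2 ≤ D ^ 2 := by
      have : (lam * |(A1 - X1) i j|) ^ 2 = lam ^ 2 * ((A1 - X1) i j) ^ 2 := by
        rw [mul_pow, sq_abs]
      rw [this]
      calc lam ^ 2 * ((A1 - X1) i j) ^ 2 ≤ (W1 i j) ^ 2 * ((A1 - X1) i j) ^ 2 :=
            mul_le_mul_of_nonneg_right hWlam (sq_nonneg _)
        _ = ((A1 - X1) i j * W1 i j) ^ 2 := by ring
        _ ≤ D ^ 2 := hterm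
    have hle : lam * |(A1 - X1) i j| ≤ D := by
      nlinarith [mul_nonneg hlampos.le (abs_nonneg ((A1 - X1) i j)), hD0]
    have habs : |(X1 - A1) i j| = |(A1 - X1) i j| := by
      rw [Matrix.sub_apply, Matrix.sub_apply, abs_sub_comm]
    rw [habs, le_div_iff₀ hlampos]
    linarith [mul_comm lam |(A1 - X1) i j|]
  have hX1dist : dist X1 A1 ≤ D / lam := by
    rw [dist_eq_norm]
    refine (Matrix.norm_le_iff (by positivity)).2 ?_
    intro i j
    rw [Real.norm_eq_abs]
    exact hent i j
  have hDlam_eps : D / lam ≤ ε := by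
    rw [div_le_iff₀ hlampos]
    have h3 : (D + 1) / ε ≤ lam := le_trans (le_max_right _ _) hlam0
    have h4 : ε * ((D + 1) / ε) ≤ ε * lam := mul_le_mul_of_nonneg_left h3 hε.le
    rw [mul_div_cancel₀ _ (ne_of_gt hε)] at h4
    nlinarith
  have hX1t : X1 ∈ t := hball (by
    rw [Metric.mem_closedBall]
    exact le_trans hX1dist hDlam_eps)
  have hA1t : A1 ∈ t := hball (by simp [Metric.mem_closedBall, hε.le])
  have hGd : dist (Gfun X1) (Gfun A1) ≤ K * (D / lam) :=
    le_trans (hlip.dist_le_mul X1 hX1t A1 hA1t) (mul_le_mul_of_nonneg_left hX1dist hK0)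
  have hΔ : ‖Gfun A1 - Gfun X1‖ ≤ K * (D / lam) := by
    rw [← dist_eq_norm, dist_comm]
    exact hGd
  have htarget : (1 - projCol X1) * A2 - (1 - projCol A1) * A2 = (Gfun A1 - Gfun X1) * A2 := by
    rw [projCol_eq_G, projCol_eq_G, Matrix.sub_mul, Matrix.sub_mul, Matrix.sub_mul,
      Matrix.one_mul]
    abel
  rw [htarget]
  have hent2 : ∀ i j, |((Gfun A1 - Gfun X1) * A2) i j| ≤ (m : ℝ) * ((K : ℝ) * (D / lam) * frob A2) := by
    intro i j
    rw [Matrix.mul_apply]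
    calc |∑ s, (Gfun A1 - Gfun X1) i s * A2 s j|
        ≤ ∑ s, |(Gfun A1 - Gfun X1) i s * A2 s j| := Finset.abs_sum_le_sum_abs _ _
      _ ≤ ∑ _s : Fin m, (K : ℝ) * (D / lam) * frob A2 := by
          apply Finset.sum_le_sum
          intro s _
          rw [abs_mul]
          have h5 : |(Gfun A1 - Gfun X1) i s| ≤ (K : ℝ) * (D / lam) := by
            have := Matrix.norm_entry_le_entrywise_sup_norm (Gfun A1 - Gfun X1) (i := i) (j := s)
            rw [Real.norm_eq_abs] at this
            exact le_trans this hΔ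
          have h6 : |A2 s j| ≤ frob A2 := abs_entry_le_frob A2 s j
          exact mul_le_mul h5 h6 (abs_nonneg _)
            (mul_nonneg hK0 (div_nonneg hD0 hlampos.le))
      _ = (m : ℝ) * ((K : ℝ) * (D / lam) * frob A2) := by
          rw [Finset.sum_const]
          simp [nsmul_eq_mul]
  have hfr : frob ((Gfun A1 - Gfun X1) * A2) ≤
      Real.sqrt (m * l) * ((m : ℝ) * ((K : ℝ) * (D / lam) * frob A2)) :=
    frob_le _ _ (mul_nonneg (Nat.cast_nonneg m)
      (mul_nonneg (mul_nonneg hK0 (div_nonneg hD0 hlampos.le)) (frob_nonneg _))) hent2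
  refine le_trans hfr ?_
  have heq2 : Real.sqrt (m * l) * ((m : ℝ) * ((K : ℝ) * (D / lam) * frob A2)) =
      c1 * K * D / lam := by
    rw [hc1]
    field_simp
  rw [heq2, div_le_div_iff₀ hlampos hlampos]
  nlinarith [hlampos]

end Aux
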